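/- Let Φ denote the cumulative distribution function of the standard normal distribution on ℝ. Then for every x ∈ ℝ: 4 · Φ(x) · (1 − Φ(x)) · exp(x²) ≥ 1, with equality if and only if x = 0. -/

import Mathlib

open Real MeasureTheory Set Filter

noncomputable def gfS19 (t : ℝ) : ℝ := Real.exp (-(t ^ 2) / 2)

lemma gfS19_pos (t : ℝ) : 0 < gfS19 t := Real.exp_pos _

lemma gfS19_cont : Continuous gfS19 := by
  unfold gfS19; fun_prop

lemma gfS19_integrable : Integrable gfS19 := by
  have h := integrable_exp_neg_mul_sq (show (0:ℝ) < 1/2 by norm_num)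
  have : gfS19 = fun x : ℝ => Real.exp (-(1/2) * x ^ 2) := by
    funext t; unfold gfS19; ring_nf
  rw [this]; exact h

lemma gfS19_even (t : ℝ) : gfS19 (-t) = gfS19 t := by
  unfold gfS19; rw [neg_sq]

noncomputable def GiS19 (x : ℝ) : ℝ := ∫ t in (0:ℝ)..x, gfS19 t

lemma GiS19_deriv (x : ℝ) : HasDerivAt GiS19 (gfS19 x) x :=
  (gfS19_cont.integral_hasStrictDerivAt 0 x).hasDerivAt

lemma GiS19_zero : GiS19 0 = 0 := intervalIntegral.integral_same

lemma GiS19_odd (x : ℝ) : GiS19 (-x) = - GiS19 x := by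
  unfold GiS19
  have h1 : (∫ t in (0:ℝ)..(-x), gfS19 t) = ∫ t in (0:ℝ)..(-x), gfS19 (-t) := by
    simp [gfS19_even]
  rw [h1, intervalIntegral.integral_comp_neg, neg_zero,
    intervalIntegral.integral_symm, neg_neg]

lemma GiS19_top : Tendsto GiS19 atTop (nhds (Real.sqrt (2*π) / 2)) := by
  have h1 : (∫ t in Ioi (0:ℝ), gfS19 t) = Real.sqrt (2*π) / 2 := by
    have h2 : gfS19 = fun x : ℝ => Real.exp (-(1/2) * x ^ 2) := by
      funext t; unfold gfS19; ring_nf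
    rw [h2, integral_gaussian_Ioi]
    rw [show π / (1/2) = 2 * π by ring]
  have := intervalIntegral_tendsto_integral_Ioi 0 gfS19_integrable.integrableOn tendsto_id
  rw [h1] at this
  exact this

lemma IicS19_zero : (∫ t in Iic (0:ℝ), gfS19 t) = Real.sqrt (2*π) / 2 := by
  have h1 : (∫ t in Iic (0:ℝ), gfS19 (-t)) = ∫ t in Ioi (-(0:ℝ)), gfS19 t :=
    integral_comp_neg_Iic 0 gfS19
  simp only [gfS19_even, neg_zero] at h1
  rw [h1]
  have h2 : gfS19 = fun x : ℝ => Real.exp (-(1/2) * x ^ 2) := by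
    funext t; unfold gfS19; ring_nf
  rw [h2, integral_gaussian_Ioi]
  rw [show π / (1/2) = 2 * π by ring]

lemma IicS19_eq (x : ℝ) :
    (∫ t in Iic x, Real.exp (-(t ^ 2) / 2)) = Real.sqrt (2*π) / 2 + GiS19 x := by
  have h := intervalIntegral.integral_Iic_sub_Iic (f := gfS19) (μ := volume)
    gfS19_integrable.integrableOn gfS19_integrable.integrableOn (a := 0) (b := x)
  have h2 : (∫ t in Iic x, Real.exp (-(t ^ 2) / 2)) = ∫ t in Iic x, gfS19 t := rfl
  rw [h2]
  rw [IicS19_zero] at h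
  unfold GiS19
  linarith

noncomputable def KfS19 (x : ℝ) : ℝ := π * x * gfS19 x - 2 * GiS19 x
noncomputable def HfS19 (x : ℝ) : ℝ :=
  π / 2 * (1 - Real.exp (-(x ^ 2))) - (GiS19 x) ^ 2

lemma gfS19_deriv (x : ℝ) : HasDerivAt gfS19 (-x * gfS19 x) x := by
  have h1 : HasDerivAt (fun t : ℝ => -(t ^ 2) / 2) (-x) x := by
    have := (hasDerivAt_pow 2 x).neg.div_const 2
    refine this.congr_deriv ?_; push_cast; ring
  have h2 := h1.exp
  refine h2.congr_deriv ?_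
  unfold gfS19; ring

lemma gfS19_sq (x : ℝ) : gfS19 x ^ 2 = Real.exp (-(x ^ 2)) := by
  unfold gfS19; rw [sq, ← Real.exp_add]; ring_nf

lemma KfS19_deriv (x : ℝ) :
    HasDerivAt KfS19 (gfS19 x * (π - 2 - π * x ^ 2)) x := by
  have h1 : HasDerivAt (fun t : ℝ => π * t) π x := by
    simpa using (hasDerivAt_id x).const_mul π
  have h2 := (h1.mul (gfS19_deriv x)).sub ((GiS19_deriv x).const_mul 2)
  refine h2.congr_deriv ?_
  ring

lemma HfS19_deriv (x : ℝ) : HasDerivAt HfS19 (gfS19 x * KfS19 x) x := by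
  have h1 : HasDerivAt (fun t : ℝ => -(t ^ 2)) (-(2 * x)) x := by
    have := (hasDerivAt_pow 2 x).neg
    refine this.congr_deriv ?_; push_cast; ring
  have h2 := ((h1.exp.const_sub 1).const_mul (π / 2)).sub ((GiS19_deriv x).pow 2)
  refine h2.congr_deriv ?_
  unfold KfS19
  rw [← gfS19_sq]
  norm_num
  ring

lemma KfS19_cont : Continuous KfS19 :=
  Differentiable.continuous (fun x => (KfS19_deriv x).differentiableAt)

lemma HfS19_cont : Continuous HfS19 :=
  Differentiable.continuous (fun x => (HfS19_deriv x).differentiableAt)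

lemma KfS19_zero : KfS19 0 = 0 := by simp [KfS19, GiS19_zero]

lemma HfS19_zero : HfS19 0 = 0 := by simp [HfS19, GiS19_zero]

lemma HfS19_even (x : ℝ) : HfS19 (-x) = HfS19 x := by
  unfold HfS19; rw [GiS19_odd, neg_sq, neg_sq]

noncomputable def rS19 : ℝ := Real.sqrt (1 - 2 / π)

lemma rS19_sq : rS19 ^ 2 = 1 - 2 / π := by
  have h : (0:ℝ) ≤ 1 - 2 / π := by
    have := Real.pi_gt_three
    rw [sub_nonneg, div_le_one Real.pi_pos]
    linarith
  rw [rS19, sq, Real.mul_self_sqrt h]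

lemma rS19_pos : 0 < rS19 := by
  apply Real.sqrt_pos.2
  have := Real.pi_gt_three
  rw [sub_pos, div_lt_one Real.pi_pos]
  linarith

lemma KfS19_mono : StrictMonoOn KfS19 (Icc 0 rS19) := by
  apply strictMonoOn_of_deriv_pos (convex_Icc _ _) KfS19_cont.continuousOn
  intro x hx
  rw [interior_Icc] at hx
  rw [(KfS19_deriv x).deriv]
  apply mul_pos (gfS19_pos x)
  have h1 : x ^ 2 < rS19 ^ 2 := by
    apply pow_lt_pow_left₀ hx.2 hx.1.le (by norm_num)
  rw [rS19_sq] at h1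
  have hπ := Real.pi_pos
  have h2 : π * (2 / π) = 2 := by field_simp
  nlinarith

lemma KfS19_anti : StrictAntiOn KfS19 (Ici rS19) := by
  apply strictAntiOn_of_deriv_neg (convex_Ici _) KfS19_cont.continuousOn
  intro x hx
  rw [interior_Ici] at hx
  rw [(KfS19_deriv x).deriv]
  apply mul_neg_of_pos_of_neg (gfS19_pos x)
  have h1 : rS19 ^ 2 < x ^ 2 := by
    apply pow_lt_pow_left₀ hx rS19_pos.le (by norm_num)
  rw [rS19_sq] at h1
  have hπ := Real.pi_pos
  have h2 : π * (2 / π) = 2 := by field_simp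
  nlinarith

lemma KfS19_pos {x : ℝ} (h0 : 0 < x) (hr : x ≤ rS19) : 0 < KfS19 x := by
  have := KfS19_mono (left_mem_Icc.2 rS19_pos.le) ⟨h0.le, hr⟩ h0
  rwa [KfS19_zero] at this

lemma HfS19_mono : StrictMonoOn HfS19 (Icc 0 rS19) := by
  apply strictMonoOn_of_deriv_pos (convex_Icc _ _) HfS19_cont.continuousOn
  intro x hx
  rw [interior_Icc] at hx
  rw [(HfS19_deriv x).deriv]
  exact mul_pos (gfS19_pos x) (KfS19_pos hx.1 hx.2.le)

lemma HfS19_top : Tendsto HfS19 atTop (nhds 0) := by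
  have h1 : Tendsto (fun x : ℝ => (GiS19 x) ^ 2) atTop
      (nhds ((Real.sqrt (2*π) / 2) ^ 2)) := GiS19_top.pow 2
  have h2 : Tendsto (fun x : ℝ => Real.exp (-(x ^ 2))) atTop (nhds 0) := by
    apply Real.tendsto_exp_atBot.comp
    apply Filter.tendsto_neg_atBot_iff.2
    exact tendsto_pow_atTop (by norm_num)
  have h3 := ((h2.const_sub 1).const_mul (π / 2)).sub h1
  have h4 : π / 2 * (1 - 0) - (Real.sqrt (2*π) / 2) ^ 2 = 0 := by
    rw [div_pow, sq, Real.mul_self_sqrt (by positivity)]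
    ring
  rw [h4] at h3
  exact h3

lemma HfS19_posr : 0 < HfS19 rS19 := by
  have := HfS19_mono (left_mem_Icc.2 rS19_pos.le) (right_mem_Icc.2 rS19_pos.le) rS19_pos
  rwa [HfS19_zero] at this

lemma HfS19_pos {x : ℝ} (hx : 0 < x) : 0 < HfS19 x := by
  rcases le_or_gt x rS19 with h | h
  · have := HfS19_mono (left_mem_Icc.2 rS19_pos.le) ⟨hx.le, h⟩ hx
    rwa [HfS19_zero] at this
  · rcases le_or_gt 0 (KfS19 x) with hK | hK
    · -- Hf monotone on [rS19, x], so Hf x ≥ Hf rS19 > 0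
      have hmono : MonotoneOn HfS19 (Icc rS19 x) := by
        apply monotoneOn_of_deriv_nonneg (convex_Icc _ _) HfS19_cont.continuousOn
        · exact (Differentiable.differentiableOn
            (fun y => (HfS19_deriv y).differentiableAt)).mono interior_subset
        · intro y hy
          rw [interior_Icc] at hy
          rw [(HfS19_deriv y).deriv]
          apply mul_nonneg (gfS19_pos y).le
          have := KfS19_anti (mem_Ici.2 hy.1.le) (mem_Ici.2 h.le) hy.2
          linarith
      have := hmono (left_mem_Icc.2 h.le) (right_mem_Icc.2 h.le) h.le
      linarith [HfS19_posr]
    · -- Hf strictly antitone on [x, ∞), tends to 0, hence positive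
      have hanti : StrictAntiOn HfS19 (Ici x) := by
        apply strictAntiOn_of_deriv_neg (convex_Ici _) HfS19_cont.continuousOn
        intro y hy
        rw [interior_Ici] at hy
        rw [(HfS19_deriv y).deriv]
        apply mul_neg_of_pos_of_neg (gfS19_pos y)
        have := KfS19_anti (mem_Ici.2 h.le) (mem_Ici.2 (h.trans hy).le) hy
        linarith
      have h1 : 0 ≤ HfS19 (x + 1) := by
        apply le_of_tendsto HfS19_top
        filter_upwards [eventually_ge_atTop (x + 1)] with y hy
        exact hanti.antitoneOn (mem_Ici.2 (by linarith)) (mem_Ici.2 (by linarith)) hy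
      have h2 : HfS19 (x + 1) < HfS19 x :=
        hanti (mem_Ici.2 le_rfl) (mem_Ici.2 (by linarith)) (by linarith)
      linarith

lemma HfS19_nonneg (x : ℝ) : 0 ≤ HfS19 x := by
  rcases lt_trichotomy x 0 with h | h | h
  · rw [← neg_neg x, HfS19_even]; exact (HfS19_pos (by linarith)).le
  · rw [h, HfS19_zero]
  · exact (HfS19_pos h).le

lemma HfS19_pos' {x : ℝ} (hx : x ≠ 0) : 0 < HfS19 x := by
  rcases lt_or_gt_of_ne hx with h | h
  · rw [← neg_neg x, HfS19_even]; exact HfS19_pos (by linarith)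
  · exact HfS19_pos h


/-- For the standard normal cdf `Φ`, `4·Φ(x)·(1 − Φ(x))·exp(x²) ≥ 1` for all
real `x`, with equality if and only if `x = 0`. -/
theorem stmt_19 (Φ : ℝ → ℝ)
    (hΦ : ∀ x : ℝ, Φ x =
      (Real.sqrt (2 * Real.pi))⁻¹ * ∫ t in Set.Iic x, Real.exp (-(t ^ 2) / 2)) :
    ∀ x : ℝ,
      1 ≤ 4 * Φ x * (1 - Φ x) * Real.exp (x ^ 2) ∧
      (4 * Φ x * (1 - Φ x) * Real.exp (x ^ 2) = 1 ↔ x = 0) := by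
  intro x
  have hπ := Real.pi_pos
  have hc : (0:ℝ) < Real.sqrt (2*π) := Real.sqrt_pos.2 (by positivity)
  have hc2 : Real.sqrt (2*π) ^ 2 = 2*π := Real.sq_sqrt (by positivity)
  set u := GiS19 x with hu
  have hΦx : Φ x = 1/2 + (Real.sqrt (2*π))⁻¹ * u := by
    rw [hΦ x, IicS19_eq x, mul_add, mul_div_assoc', inv_mul_cancel₀ hc.ne']
  have hkey : π * (4 * Φ x * (1 - Φ x)) = π - 2 * u ^ 2 := by
    rw [hΦx]
    have h4 : ((Real.sqrt (2*π))⁻¹ * u) ^ 2 = u ^ 2 / (2*π) := by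
      rw [mul_pow, ← hc2]
      field_simp
      rw [hc2, hc2]
    have hπinv : π * π⁻¹ = 1 := mul_inv_cancel₀ hπ.ne'
    linear_combination (-4 * π : ℝ) * h4 + (-2 * u ^ 2) * hπinv
  have hE : 0 < Real.exp (x ^ 2) := Real.exp_pos _
  have heE : Real.exp (-(x ^ 2)) * Real.exp (x ^ 2) = 1 := by
    rw [← Real.exp_add]; simp
  have hH : 0 ≤ π / 2 * (1 - Real.exp (-(x ^ 2))) - u ^ 2 := HfS19_nonneg x
  have h7 : 0 ≤ (π - 2*u^2 - π * Real.exp (-(x^2))) * Real.exp (x^2) :=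
    mul_nonneg (by linarith) hE.le
  have h8 : π * (4 * Φ x * (1 - Φ x)) * Real.exp (x^2)
      = (π - 2*u^2) * Real.exp (x^2) := by rw [hkey]
  refine ⟨by nlinarith [h7, h8, heE, hπ], ?_, ?_⟩
  · intro heq
    by_contra hne
    have hHs : 0 < π / 2 * (1 - Real.exp (-(x ^ 2))) - u ^ 2 := HfS19_pos' hne
    have h7' : 0 < (π - 2*u^2 - π * Real.exp (-(x^2))) * Real.exp (x^2) :=
      mul_pos (by linarith) hE
    nlinarith [h7', h8, heq, heE, hπ]
  · intro hx0
    subst hx0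
    have hu0 : u = 0 := GiS19_zero
    have hΦ0 : Φ 0 = 1/2 := by rw [hΦx, hu0]; ring
    rw [hΦ0]
    norm_num
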